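/- Let n = 3 and let p, q, r ∈ (0,1). There exist p', q', r' ∈ (0,1) such that the lazy transposition sequence with parameters (1,2,p),(2,3,q),(1,2,r) and the one with parameters (2,3,p'),(1,2,q'),(2,3,r') induce the same distribution on S_3 (i.e., for every α ∈ S_3 the total weights ∑_{ω : π(ω)=α} w(ω) agree) if and only if p/(1-p) + r/(1-r) = q/(1-q); moreover, in that case the unique such choice is (p', q', r') = (r, q, p). -/

import Mathlib

open Finset

/-- The random permutation determined by outcomes `ω`: the composition `s₁ ∘ s₂ ∘ ⋯ ∘ s_ℓ`,
where `sᵢ` is the transposition swapping `a i` and `b i` if `ω i = true` and the identity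
otherwise (convention `(σ * τ) x = σ (τ x)`). -/
def lazyPerm {n ℓ : ℕ} (a b : Fin ℓ → Fin n) (ω : Fin ℓ → Bool) : Equiv.Perm (Fin n) :=
  (List.ofFn fun i => if ω i then Equiv.swap (a i) (b i) else 1).prod

/-- The weight `∏ᵢ pᵢ^{ωᵢ} (1-pᵢ)^{1-ωᵢ}` of an outcome `ω`. -/
def lazyWeight {ℓ : ℕ} (p : Fin ℓ → ℝ) (ω : Fin ℓ → Bool) : ℝ :=
  ∏ i, if ω i then p i else 1 - p i

/-- `(aᵢ, bᵢ, pᵢ)ᵢ` is a transposition shuffle of order `n`: a lazy transposition sequence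
(`aᵢ ≠ bᵢ`, `pᵢ ∈ [0,1]`) such that the induced distribution on `Sₙ` is uniform. -/
def IsTranspositionShuffle (n ℓ : ℕ) (a b : Fin ℓ → Fin n) (p : Fin ℓ → ℝ) : Prop :=
  (∀ i, a i ≠ b i) ∧ (∀ i, 0 ≤ p i ∧ p i ≤ 1) ∧
    ∀ α : Equiv.Perm (Fin n),
      ∑ ω ∈ univ.filter fun ω : Fin ℓ → Bool => lazyPerm a b ω = α,
        lazyWeight p ω = 1 / (n.factorial : ℝ)


/-- The induced distribution on permutations: the total weight of outcomes producing `α`. -/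
def lazyDist {n ℓ : ℕ} (a b : Fin ℓ → Fin n) (p : Fin ℓ → ℝ) (α : Equiv.Perm (Fin n)) : ℝ :=
  ∑ ω ∈ univ.filter fun ω : Fin ℓ → Bool => lazyPerm a b ω = α, lazyWeight p ω

def e3 : Bool × Bool × Bool ≃ (Fin 3 → Bool) where
  toFun t := ![t.1, t.2.1, t.2.2]
  invFun f := (f 0, f 1, f 2)
  left_inv t := by simp
  right_inv f := by funext i; fin_cases i <;> simp

lemma lazyDist3 {n : ℕ} (a b : Fin 3 → Fin n) (P : Fin 3 → ℝ) (α : Equiv.Perm (Fin n)) :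
    lazyDist a b P α = ∑ x : Bool, ∑ y : Bool, ∑ z : Bool,
      if (if x then Equiv.swap (a 0) (b 0) else 1) *
          ((if y then Equiv.swap (a 1) (b 1) else 1) *
            (if z then Equiv.swap (a 2) (b 2) else 1)) = α then
        (if x then P 0 else 1 - P 0) * ((if y then P 1 else 1 - P 1) *
          (if z then P 2 else 1 - P 2)) else 0 := by
  rw [lazyDist, Finset.sum_filter,
    ← Equiv.sum_comp e3 (fun ω => if lazyPerm a b ω = α then lazyWeight P ω else 0),
    Fintype.sum_prod_type]
  refine Finset.sum_congr rfl fun x _ => ?_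
  rw [Fintype.sum_prod_type]
  refine Finset.sum_congr rfl fun y _ => Finset.sum_congr rfl fun z _ => ?_
  have h1 : lazyPerm a b (e3 (x, y, z)) = (if x then Equiv.swap (a 0) (b 0) else 1) *
      ((if y then Equiv.swap (a 1) (b 1) else 1) *
        (if z then Equiv.swap (a 2) (b 2) else 1)) := by
    simp [lazyPerm, e3, List.ofFn_succ]
    cases x <;> cases y <;> cases z <;> simp
  have h2 : lazyWeight P (e3 (x, y, z)) = (if x then P 0 else 1 - P 0) *
      ((if y then P 1 else 1 - P 1) * (if z then P 2 else 1 - P 2)) := by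
    simp [lazyWeight, e3, Fin.prod_univ_three, mul_assoc]
    cases x <;> cases y <;> cases z <;> simp
  rw [h1, h2]

/-- braid lemma: for `p, q, r ∈ (0,1)`, there exist `p', q', r' ∈ (0,1)` such
that the lazy transposition sequences `(1,2,p),(2,3,q),(1,2,r)` and `(2,3,p'),(1,2,q'),(2,3,r')`
induce the same distribution on `S₃` if and only if `p/(1-p) + r/(1-r) = q/(1-q)`; and in
that case the unique choice is `(p',q',r') = (r,q,p)`.  (Positions are `0,1,2` in `Fin 3`.) -/
theorem braid_move_lemma (p q r : ℝ)
    (hp : p ∈ Set.Ioo (0 : ℝ) 1) (hq : q ∈ Set.Ioo (0 : ℝ) 1) (hr : r ∈ Set.Ioo (0 : ℝ) 1) :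
    ((∃ p' q' r' : ℝ, p' ∈ Set.Ioo (0 : ℝ) 1 ∧ q' ∈ Set.Ioo (0 : ℝ) 1 ∧
        r' ∈ Set.Ioo (0 : ℝ) 1 ∧
        ∀ α : Equiv.Perm (Fin 3),
          lazyDist ![0, 1, 0] ![1, 2, 1] ![p, q, r] α =
            lazyDist ![1, 0, 1] ![2, 1, 2] ![p', q', r'] α) ↔
      p / (1 - p) + r / (1 - r) = q / (1 - q)) ∧
    ∀ p' q' r' : ℝ, p' ∈ Set.Ioo (0 : ℝ) 1 → q' ∈ Set.Ioo (0 : ℝ) 1 →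
      r' ∈ Set.Ioo (0 : ℝ) 1 →
      (∀ α : Equiv.Perm (Fin 3),
        lazyDist ![0, 1, 0] ![1, 2, 1] ![p, q, r] α =
          lazyDist ![1, 0, 1] ![2, 1, 2] ![p', q', r'] α) →
      p' = r ∧ q' = q ∧ r' = p := by
  obtain ⟨hp0, hp1⟩ := hp
  obtain ⟨hq0, hq1⟩ := hq
  obtain ⟨hr0, hr1⟩ := hr
  have h1p : (0:ℝ) < 1 - p := by linarith
  have h1q : (0:ℝ) < 1 - q := by linarith
  have h1r : (0:ℝ) < 1 - r := by linarith
  -- uniqueness part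
  have uniq : ∀ p' q' r' : ℝ, p' ∈ Set.Ioo (0 : ℝ) 1 → q' ∈ Set.Ioo (0 : ℝ) 1 →
      r' ∈ Set.Ioo (0 : ℝ) 1 →
      (∀ α : Equiv.Perm (Fin 3),
        lazyDist ![0, 1, 0] ![1, 2, 1] ![p, q, r] α =
          lazyDist ![1, 0, 1] ![2, 1, 2] ![p', q', r'] α) →
      p' = r ∧ q' = q ∧ r' = p := by
    intro p' q' r' hp' hq' hr' h
    have E1 := h (Equiv.swap 0 2)
    have E2 := h (Equiv.swap 0 1 * Equiv.swap 1 2)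
    have E3 := h (Equiv.swap 1 2 * Equiv.swap 0 1)
    rw [lazyDist3, lazyDist3] at E1 E2 E3
    simp (config := { decide := true }) [Fintype.sum_bool, Matrix.cons_val_zero,
      Matrix.cons_val_one, Matrix.head_cons] at E1 E2 E3
    have h5 : q' * r' = p * q := by linear_combination -E1 - E2
    have h6 : p' * q' = q * r := by linear_combination -E1 - E3
    have hpr : p' = r := by
      have hx : p' * (p * q) = r * (p * q) := by linear_combination -p' * h5 - E1
      exact mul_right_cancel₀ (by positivity) hx
    have hqq : q' = q := by
      have hx : r * q' = r * q := by linear_combination h6 - q' * hpr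
      exact mul_left_cancel₀ hr0.ne' hx
    have hrp : r' = p := by
      have hx : q * r' = q * p := by linear_combination h5 - r' * hqq
      exact mul_left_cancel₀ hq0.ne' hx
    exact ⟨hpr, hqq, hrp⟩
  refine ⟨⟨?_, ?_⟩, uniq⟩
  · rintro ⟨p', q', r', hp', hq', hr', h⟩
    obtain ⟨hpr, hqq, hrp⟩ := uniq p' q' r' hp' hq' hr' h
    have E4 := h (Equiv.swap 1 2)
    rw [lazyDist3, lazyDist3] at E4
    simp (config := { decide := true }) [Fintype.sum_bool, Matrix.cons_val_zero,
      Matrix.cons_val_one, Matrix.head_cons] at E4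
    rw [hpr, hqq, hrp] at E4
    field_simp
    linear_combination -E4
  · intro hcond
    have key : (1-q)*(p*(1-r)+r*(1-p)) = q*(1-p)*(1-r) := by
      field_simp at hcond
      linear_combination hcond
    refine ⟨r, q, p, ⟨hr0, hr1⟩, ⟨hq0, hq1⟩, ⟨hp0, hp1⟩, fun α => ?_⟩
    rw [lazyDist3, lazyDist3]
    fin_cases α <;>
      simp (config := { decide := true }) [Fintype.sum_bool, Matrix.cons_val_zero,
        Matrix.cons_val_one, Matrix.head_cons] <;>
      first
        | ring1
        | linear_combination key
        | linear_combination (-1 : ℝ) * key
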